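/- Let R be an n×n nonnegative matrix whose row sums are all at most 1, and suppose that from every index i there is a finite sequence i = i_0, i_1, …, i_k with R_{i_{j-1} i_j} > 0 and the row sum of R at i_k strictly less than 1. Then the spectral radius of R satisfies ρ(R) < 1, so I - R is invertible. -/

import Mathlib

open Matrix Finset
open scoped ENNReal NNReal

attribute [local instance] Matrix.linftyOpNormedRing Matrix.linftyOpNormedAlgebra

section Aux
variable {n : ℕ} {R : Matrix (Fin n) (Fin n) ℝ}

lemma aux_pow_nonneg (hR : ∀ i j, 0 ≤ R i j) (m : ℕ) : ∀ i j, 0 ≤ (R ^ m) i j := by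
  induction m with
  | zero =>
    intro i j
    rw [pow_zero, Matrix.one_apply]
    split <;> norm_num
  | succ m ih =>
    intro i j
    rw [pow_succ, Matrix.mul_apply]
    exact Finset.sum_nonneg fun k _ => mul_nonneg (ih i k) (hR k j)

lemma aux_rowsum_succ (m : ℕ) (i : Fin n) :
    ∑ j, (R ^ (m + 1)) i j = ∑ j, (R ^ m) i j * (∑ k, R j k) := by
  simp_rw [pow_succ, Matrix.mul_apply, Finset.mul_sum]
  rw [Finset.sum_comm]

lemma aux_rowsum_le (hR : ∀ i j, 0 ≤ R i j) (hrow : ∀ i, ∑ j, R i j ≤ 1) (m : ℕ) :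
    ∀ i, ∑ j, (R ^ m) i j ≤ 1 := by
  induction m with
  | zero => intro i; simp [Matrix.one_apply]
  | succ m ih =>
    intro i
    rw [aux_rowsum_succ]
    calc ∑ j, (R ^ m) i j * (∑ k, R j k) ≤ ∑ j, (R ^ m) i j * 1 :=
          Finset.sum_le_sum fun j _ =>
            mul_le_mul_of_nonneg_left (hrow j) (aux_pow_nonneg hR m i j)
      _ = ∑ j, (R ^ m) i j := by simp
      _ ≤ 1 := ih i

lemma aux_rowsum_anti (hR : ∀ i j, 0 ≤ R i j) (hrow : ∀ i, ∑ j, R i j ≤ 1)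
    {m m' : ℕ} (h : m ≤ m') (i : Fin n) : ∑ j, (R ^ m') i j ≤ ∑ j, (R ^ m) i j := by
  induction m', h using Nat.le_induction with
  | base => exact le_refl _
  | succ m' hm ih =>
    refine le_trans ?_ ih
    rw [aux_rowsum_succ]
    calc ∑ j, (R ^ m') i j * (∑ k, R j k) ≤ ∑ j, (R ^ m') i j * 1 :=
          Finset.sum_le_sum fun j _ =>
            mul_le_mul_of_nonneg_left (hrow j) (aux_pow_nonneg hR m' i j)
      _ = ∑ j, (R ^ m') i j := by simp

lemma aux_path_pos (hR : ∀ i j, 0 ≤ R i j) {k : ℕ} {p : Fin (k + 1) → Fin n}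
    (hp : ∀ j : Fin k, 0 < R (p j.castSucc) (p j.succ)) :
    ∀ m (hm : m ≤ k), 0 < (R ^ m) (p 0) (p ⟨m, Nat.lt_succ_of_le hm⟩) := by
  intro m
  induction m with
  | zero =>
    intro _
    have : p ⟨0, Nat.lt_succ_of_le (Nat.zero_le k)⟩ = p 0 := rfl
    rw [pow_zero, this, Matrix.one_apply_eq]
    norm_num
  | succ m ih =>
    intro hm
    have hmk : m ≤ k := Nat.le_of_succ_le hm
    have h1 := ih hmk
    have h2 : 0 < R (p ⟨m, Nat.lt_succ_of_le hmk⟩) (p ⟨m + 1, Nat.lt_succ_of_le hm⟩) := by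
      have := hp ⟨m, hm⟩
      exact this
    rw [pow_succ, Matrix.mul_apply]
    have hterm : 0 < (R ^ m) (p 0) (p ⟨m, Nat.lt_succ_of_le hmk⟩) *
        R (p ⟨m, Nat.lt_succ_of_le hmk⟩) (p ⟨m + 1, Nat.lt_succ_of_le hm⟩) :=
      mul_pos h1 h2
    refine lt_of_lt_of_le hterm ?_
    exact Finset.single_le_sum
      (fun l _ => mul_nonneg (aux_pow_nonneg hR m _ l) (hR l _)) (Finset.mem_univ _)

lemma aux_strict (hR : ∀ i j, 0 ≤ R i j) (hrow : ∀ i, ∑ j, R i j ≤ 1)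
    {k : ℕ} {p : Fin (k + 1) → Fin n}
    (hp : ∀ j : Fin k, 0 < R (p j.castSucc) (p j.succ))
    (hlast : ∑ j, R (p (Fin.last k)) j < 1) :
    ∑ j, (R ^ (k + 1)) (p 0) j < 1 := by
  rw [aux_rowsum_succ]
  have hpos : 0 < (R ^ k) (p 0) (p (Fin.last k)) := by
    have := aux_path_pos hR hp k le_rfl
    exact this
  calc ∑ j, (R ^ k) (p 0) j * (∑ l, R j l)
      < ∑ j, (R ^ k) (p 0) j * 1 := by
        refine Finset.sum_lt_sum (fun j _ =>
          mul_le_mul_of_nonneg_left (hrow j) (aux_pow_nonneg hR k _ j))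
          ⟨p (Fin.last k), Finset.mem_univ _, ?_⟩
        exact mul_lt_mul_of_pos_left hlast hpos
    _ = ∑ j, (R ^ k) (p 0) j := by simp
    _ ≤ 1 := aux_rowsum_le hR hrow k _

end Aux

theorem substochastic_spectral_radius_lt_one (n : ℕ)
    (R : Matrix (Fin n) (Fin n) ℝ)
    (hR : ∀ i j, 0 ≤ R i j) (hrow : ∀ i, ∑ j, R i j ≤ 1)
    (hpath : ∀ i : Fin n, ∃ k : ℕ, ∃ p : Fin (k + 1) → Fin n,
      p 0 = i ∧ (∀ j : Fin k, 0 < R (p j.castSucc) (p j.succ)) ∧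
        ∑ j, R (p (Fin.last k)) j < 1) :
    spectralRadius ℂ (R.map (Complex.ofReal)) < 1 ∧ IsUnit (1 - R) := by
  classical
  -- choose path lengths
  set K : ℕ := Finset.univ.sup (fun i : Fin n => (hpath i).choose) with hK
  set M : ℕ := K + 1 with hM
  -- every row sum of R^M is < 1
  have hrowM : ∀ i, ∑ j, (R ^ M) i j < 1 := by
    intro i
    obtain ⟨p, hp0, hp, hlast⟩ := (hpath i).choose_spec
    have hk : (hpath i).choose + 1 ≤ M :=
      Nat.succ_le_succ (Finset.le_sup (f := fun i : Fin n => (hpath i).choose) (Finset.mem_univ i))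
    have := aux_strict hR hrow hp hlast
    rw [hp0] at this
    exact lt_of_le_of_lt (aux_rowsum_anti hR hrow hk i) this
  -- norm of (mapped matrix)^M is < 1
  set A : Matrix (Fin n) (Fin n) ℂ := R.map Complex.ofReal with hA
  have hmap : A ^ M = (R ^ M).map Complex.ofReal := by
    have := map_pow (RingHom.mapMatrix Complex.ofRealHom : Matrix (Fin n) (Fin n) ℝ →+* Matrix (Fin n) (Fin n) ℂ) R M
    exact this.symm
  have hnorm : ‖A ^ M‖₊ < 1 := by
    rw [hmap, Matrix.linfty_opNNNorm_def]
    refine Finset.sup_lt_iff (by norm_num) |>.mpr fun i _ => ?_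
    have : ((∑ j, ‖((R ^ M).map Complex.ofReal) i j‖₊ : ℝ≥0) : ℝ) < 1 := by
      push_cast
      have : ∀ j, ‖((R ^ M).map Complex.ofReal) i j‖ = (R ^ M) i j := by
        intro j
        simp only [Matrix.map_apply, Complex.norm_real]
        exact abs_of_nonneg (aux_pow_nonneg hR M i j)
      calc ∑ j, ‖((R ^ M).map Complex.ofReal) i j‖ = ∑ j, (R ^ M) i j := by
            exact Finset.sum_congr rfl fun j _ => this j
        _ < 1 := hrowM i
    exact_mod_cast this
  have hone : ‖(1 : Matrix (Fin n) (Fin n) ℂ)‖₊ ≤ 1 := by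
    rw [Matrix.linfty_opNNNorm_def]
    refine Finset.sup_le fun i _ => ?_
    have : ∑ j, ‖(1 : Matrix (Fin n) (Fin n) ℂ) i j‖₊ = 1 := by
      simp [Matrix.one_apply, apply_ite]
    rw [this]
  have hsr : spectralRadius ℂ A < 1 := by
    have hle := spectrum.spectralRadius_le_pow_nnnorm_pow_one_div ℂ A K
    refine lt_of_le_of_lt hle ?_
    have h1 : (‖A ^ (K + 1)‖₊ : ℝ≥0∞) ^ (1 / (K + 1) : ℝ) < 1 :=
      ENNReal.rpow_lt_one (by exact_mod_cast hnorm) (by positivity)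
    have h2 : (‖(1 : Matrix (Fin n) (Fin n) ℂ)‖₊ : ℝ≥0∞) ^ (1 / (K + 1) : ℝ) ≤ 1 :=
      ENNReal.rpow_le_one (by exact_mod_cast hone) (by positivity)
    calc (‖A ^ (K + 1)‖₊ : ℝ≥0∞) ^ (1 / (K + 1) : ℝ) *
          (‖(1 : Matrix (Fin n) (Fin n) ℂ)‖₊ : ℝ≥0∞) ^ (1 / (K + 1) : ℝ)
        ≤ (‖A ^ (K + 1)‖₊ : ℝ≥0∞) ^ (1 / (K + 1) : ℝ) * 1 := by gcongr
      _ < 1 := by simpa using h1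
  refine ⟨hsr, ?_⟩
  -- 1 is not in the spectrum
  have hnotmem : (1 : ℂ) ∉ spectrum ℂ A := by
    intro hmem
    have : (‖(1 : ℂ)‖₊ : ℝ≥0∞) ≤ spectralRadius ℂ A := le_iSup₂ (f := fun k (_ : k ∈ spectrum ℂ A) => (‖k‖₊ : ℝ≥0∞)) (1 : ℂ) hmem
    simp only [nnnorm_one, ENNReal.coe_one] at this
    exact absurd (lt_of_le_of_lt this hsr) (lt_irrefl _)
  have hunitC : IsUnit (1 - A) := by
    have := spectrum.notMem_iff.mp hnotmem
    simpa using this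
  have hdetC : (1 - A).det ≠ 0 := by
    intro h
    exact (Matrix.isUnit_iff_isUnit_det _ |>.mp hunitC).ne_zero (by simpa using h)
  have hmapsub : (1 - R).map (Complex.ofReal) = 1 - A := by
    have := map_sub (RingHom.mapMatrix Complex.ofRealHom : Matrix (Fin n) (Fin n) ℝ →+* Matrix (Fin n) (Fin n) ℂ) 1 R
    rw [map_one] at this
    exact this
  have hdetR : (1 - R).det ≠ 0 := by
    intro h
    apply hdetC
    rw [← hmapsub]
    have hd : ((1 - R).map Complex.ofReal).det = Complex.ofRealHom (1 - R).det :=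
      (RingHom.map_det Complex.ofRealHom (1 - R)).symm
    rw [hd, h, map_zero]
  exact (Matrix.isUnit_iff_isUnit_det _).mpr (isUnit_iff_ne_zero.mpr hdetR)
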